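/- arXiv:2303.01841 — 2 statements merged into one kernel-verified Lean document; each statement's English description precedes it below -/
import Mathlib

section
/- In the piecewise setting on [−1,1], for every integer N ≥ 1 the tail sum of the squared integral terms satisfies Σ_{n=N}^∞ A_n² ≤ L²·(K+1)²·(1/(2(2N+1)) + 1/(2(2N−1))), where A_n = −(1/(2√(2n+1)))·Σ_{i=1}^{K+1} ∫_{b_{i−1}}^{b_i} g_i'(y)·(P_{n+1}(y) − P_{n−1}(y)) dy. -/
open MeasureTheory Set

noncomputable def legendreP (n : ℕ) (y : ℝ) : ℝ :=
  (1 / ((2 : ℝ) ^ n * (n.factorial : ℝ))) *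
    iteratedDeriv n (fun x : ℝ => (x ^ 2 - 1) ^ n) y

noncomputable def hzeta (s a : ℝ) : ℝ := ∑' k : ℕ, ((k : ℝ) + a) ^ (-s)

noncomputable def legCoeff (g : ℝ → ℝ) (n : ℕ) : ℝ :=
  (Real.sqrt (2 * (n : ℝ) + 1) / 2) * ∫ y in (-1 : ℝ)..1, g y * legendreP n y

noncomputable def Aterm (K : ℕ) (b : ℕ → ℝ) (G : ℕ → ℝ → ℝ) (n : ℕ) : ℝ :=
  -(1 / (2 * Real.sqrt (2 * (n : ℝ) + 1))) *
    ∑ i ∈ Finset.range (K + 1),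
      ∫ y in (b i)..(b (i + 1)),
        derivWithin (G i) (Set.Icc (b i) (b (i + 1))) y *
          (legendreP (n + 1) y - legendreP (n - 1) y)

noncomputable def Bterm (K : ℕ) (b : ℕ → ℝ) (G : ℕ → ℝ → ℝ) (n : ℕ) : ℝ :=
  (1 / (2 * Real.sqrt (2 * (n : ℝ) + 1))) *
    ∑ i ∈ Finset.Icc 1 K,
      (G (i - 1) (b i) - G i (b i)) *
        (legendreP (n + 1) (b i) - legendreP (n - 1) (b i))

noncomputable def jumpSum (K : ℕ) (b : ℕ → ℝ) (G : ℕ → ℝ → ℝ) : ℝ :=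
  ∑ i ∈ Finset.Icc 1 K, |G i (b i) - G (i - 1) (b i)|


open Polynomial

noncomputable def uP (n : ℕ) : Polynomial ℝ := (X ^ 2 - 1) ^ n
noncomputable def legPoly (n : ℕ) : Polynomial ℝ :=
  Polynomial.C (1 / ((2 : ℝ) ^ n * (n.factorial : ℝ))) * (derivative^[n] (uP n))

lemma iteratedDeriv_eval (p : Polynomial ℝ) (k : ℕ) :
    iteratedDeriv k (fun x : ℝ => p.eval x) = fun y => (derivative^[k] p).eval y := by
  induction k with
  | zero => simp
  | succ k ih =>
    rw [iteratedDeriv_succ, ih, Function.iterate_succ_apply']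
    funext y
    exact Polynomial.deriv _

lemma legendreP_eq (n : ℕ) (y : ℝ) : legendreP n y = (legPoly n).eval y := by
  have : (fun x : ℝ => (x ^ 2 - 1) ^ n) = fun x => (uP n).eval x := by
    funext x; simp [uP]
  rw [legendreP, this, iteratedDeriv_eval, legPoly]
  simp [mul_comm]

-- boundary vanishing
lemma uP_deriv_factor (n k : ℕ) (hk : k ≤ n) :
    ∃ q : Polynomial ℝ, derivative^[k] (uP n) = (X ^ 2 - 1) ^ (n - k) * q := by
  induction k with
  | zero => exact ⟨1, by simp [uP]⟩
  | succ k ih =>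
    obtain ⟨q, hq⟩ := ih (Nat.le_of_succ_le hk)
    refine ⟨C ((n - k : ℕ) : ℝ) * (2 * X) * q + (X ^ 2 - 1) * derivative q, ?_⟩
    rw [Function.iterate_succ_apply', hq]
    have hnk : n - k = (n - (k+1)) + 1 := by omega
    rw [hnk]
    rw [derivative_mul, derivative_pow]
    simp only [derivative_sub, derivative_X_pow, derivative_one, Nat.add_sub_cancel, map_ofNat]
    rw [pow_succ]
    simp only [Nat.cast_ofNat, map_ofNat]
    ring

lemma uP_deriv_vanish (n k : ℕ) (hk : k < n) (y : ℝ) (hy : y ^ 2 = 1) :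
    (derivative^[k] (uP n)).eval y = 0 := by
  obtain ⟨q, hq⟩ := uP_deriv_factor n k hk.le
  rw [hq]
  have : n - k = (n - k - 1) + 1 := by omega
  rw [this]
  simp [hy]

lemma polyFTC (p : Polynomial ℝ) :
    ∫ y in (-1:ℝ)..1, (derivative p).eval y = p.eval 1 - p.eval (-1) := by
  refine intervalIntegral.integral_eq_sub_of_hasDerivAt (fun x _ => p.hasDerivAt x) ?_
  exact ((derivative p).continuous_aeval).intervalIntegrable _ _

lemma poly_ibp (p q : Polynomial ℝ) :
    ∫ y in (-1:ℝ)..1, (derivative p).eval y * q.eval y =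
      (p.eval 1 * q.eval 1 - p.eval (-1) * q.eval (-1))
        - ∫ y in (-1:ℝ)..1, p.eval y * (derivative q).eval y := by
  have h := polyFTC (p * q)
  rw [derivative_mul] at h
  have hs : ∫ y in (-1:ℝ)..1, ((derivative p * q).eval y + (p * derivative q).eval y)
      = (∫ y in (-1:ℝ)..1, (derivative p * q).eval y)
        + ∫ y in (-1:ℝ)..1, (p * derivative q).eval y := by
    apply intervalIntegral.integral_add
    · exact ((derivative p * q).continuous_aeval).intervalIntegrable _ _
    · exact ((p * derivative q).continuous_aeval).intervalIntegrable _ _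
  simp only [eval_add, eval_mul] at h hs
  rw [hs] at h
  linarith

lemma poly_ibp_iter (n : ℕ) (p q : Polynomial ℝ)
    (hp : ∀ k < n, ∀ y : ℝ, y ^ 2 = 1 → (derivative^[k] p).eval y = 0) :
    ∫ y in (-1:ℝ)..1, (derivative^[n] p).eval y * q.eval y =
      (-1 : ℝ) ^ n * ∫ y in (-1:ℝ)..1, p.eval y * (derivative^[n] q).eval y := by
  induction n generalizing q with
  | zero => simp
  | succ n ih =>
    have h1 : derivative^[n+1] p = derivative (derivative^[n] p) :=
      Function.iterate_succ_apply' _ _ _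
    rw [h1, poly_ibp]
    rw [hp n (Nat.lt_succ_self n) 1 (by norm_num),
        hp n (Nat.lt_succ_self n) (-1) (by norm_num)]
    have h2 := ih (derivative q) (fun k hk => hp k (hk.trans (Nat.lt_succ_self n)))
    rw [h2, ← Function.iterate_succ_apply derivative n q]
    ring


lemma uP_monic (n : ℕ) : (uP n).Monic := by
  have h : (X ^ 2 - 1 : Polynomial ℝ).Monic := by
    have := Polynomial.monic_X_pow_sub_C (1 : ℝ) (two_ne_zero)
    simpa using this
  exact h.pow n

lemma uP_natDegree (n : ℕ) : (uP n).natDegree = 2 * n := by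
  have h : (X ^ 2 - 1 : Polynomial ℝ).natDegree = 2 := by
    have : (X ^ 2 - C (1:ℝ)).natDegree = 2 := natDegree_X_pow_sub_C
    simpa using this
  rw [uP, natDegree_pow, h, mul_comm]

lemma uP_iterate_deriv (n : ℕ) :
    derivative^[2 * n] (uP n) = C (((2 * n).factorial : ℝ)) := by
  have hdeg : (derivative^[2 * n] (uP n)).natDegree = 0 := by
    have := natDegree_iterate_derivative (uP n) (2 * n)
    rw [uP_natDegree] at this
    omega
  rw [eq_C_of_natDegree_eq_zero hdeg, coeff_iterate_derivative]
  have hc : (uP n).coeff (0 + 2 * n) = 1 := by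
    have := (uP_monic n).leadingCoeff
    rw [Polynomial.leadingCoeff, uP_natDegree] at this
    simpa using this
  rw [hc]
  simp [Nat.descFactorial_self]

noncomputable def In (n : ℕ) : ℝ := ∫ y in (-1:ℝ)..1, (1 - y ^ 2) ^ n

lemma In_zero : In 0 = 2 := by simp [In]; norm_num

lemma In_cont (n : ℕ) : Continuous (fun y : ℝ => (1 - y ^ 2) ^ n) := by continuity

lemma In_rec (n : ℕ) : (2 * n + 3) * In (n + 1) = (2 * n + 2) * In n := by
  have key : ∀ x : ℝ, HasDerivAt (fun x : ℝ => x * (1 - x ^ 2) ^ (n + 1))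
      ((2 * n + 3) * (1 - x ^ 2) ^ (n + 1) - (2 * n + 2) * (1 - x ^ 2) ^ n) x := by
    intro x
    have h1 : HasDerivAt (fun x : ℝ => 1 - x ^ 2) (-(2 * x)) x := by
      simpa using ((hasDerivAt_pow 2 x).const_sub 1)
    have h2 := h1.pow (n + 1)
    have h3 : HasDerivAt (fun x : ℝ => x * (1 - x ^ 2) ^ (n + 1))
        (1 * (1 - x ^ 2) ^ (n + 1) + x * (↑(n + 1) * (1 - x ^ 2) ^ (n + 1 - 1) * -(2 * x))) x :=
      (hasDerivAt_id x).mul h2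
    convert h3 using 1
    simp only [Nat.add_sub_cancel, id_eq]
    push_cast
    rw [pow_succ]
    ring
  have hint : IntervalIntegrable
      (fun x : ℝ => (2 * n + 3) * (1 - x ^ 2) ^ (n + 1) - (2 * n + 2) * (1 - x ^ 2) ^ n)
      MeasureTheory.volume (-1) 1 := by
    apply Continuous.intervalIntegrable
    exact (continuous_const.mul (In_cont (n+1))).sub (continuous_const.mul (In_cont n))
  have h := intervalIntegral.integral_eq_sub_of_hasDerivAt (fun x _ => key x) hint
  rw [intervalIntegral.integral_sub (f := fun y : ℝ => (2 * (n:ℝ) + 3) * (1 - y ^ 2) ^ (n + 1))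
      (g := fun y : ℝ => (2 * (n:ℝ) + 2) * (1 - y ^ 2) ^ n) ((continuous_const.mul (In_cont (n+1))).intervalIntegrable _ _)
      ((continuous_const.mul (In_cont n)).intervalIntegrable _ _),
    intervalIntegral.integral_const_mul, intervalIntegral.integral_const_mul] at h
  simp only [one_pow, neg_one_sq] at h
  norm_num at h
  rw [← In, ← In] at h
  linarith

lemma In_formula (n : ℕ) :
    In n = 2 ^ (2 * n + 1) * (n.factorial : ℝ) ^ 2 / ((2 * n + 1).factorial : ℝ) := by
  induction n with
  | zero => simp [In_zero]
  | succ n ih =>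
    have hrec := In_rec n
    have h3 : (0:ℝ) < 2 * n + 3 := by positivity
    have hfac : ((2 * (n+1) + 1).factorial : ℝ)
        = (2 * n + 3) * ((2 * n + 2)) * ((2 * n + 1).factorial : ℝ) := by
      have : 2 * (n+1) + 1 = (2 * n + 2) + 1 := by ring
      rw [this, Nat.factorial_succ, Nat.factorial_succ]
      push_cast
      ring
    have hfn : ((n+1).factorial : ℝ) = (n + 1) * (n.factorial : ℝ) := by
      rw [Nat.factorial_succ]; push_cast; ring
    have hpos : ((2 * n + 1).factorial : ℝ) > 0 := by positivity
    have : In (n+1) = (2 * n + 2) / (2 * n + 3) * In n := by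
      field_simp at hrec ⊢
      linarith
    rw [this, ih, hfac, hfn]
    have h2 : (2:ℝ) ^ (2 * (n+1) + 1) = 2 ^ (2 * n + 1) * 4 := by
      rw [show 2 * (n+1) + 1 = (2 * n + 1) + 2 by ring, pow_add]; norm_num
    rw [h2]
    field_simp
    ring

lemma legPoly_sq_integral (n : ℕ) :
    ∫ y in (-1:ℝ)..1, (legPoly n).eval y * (legPoly n).eval y = 2 / (2 * n + 1) := by
  have c := (1 : ℝ) / ((2:ℝ)^n * (n.factorial : ℝ))
  have hibp := poly_ibp_iter n (uP n) (derivative^[n] (uP n))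
    (fun k hk y hy => uP_deriv_vanish n k hk y hy)
  rw [← Function.iterate_add_apply, show n + n = 2 * n by ring, uP_iterate_deriv] at hibp
  have huint : ∫ y in (-1:ℝ)..1, (uP n).eval y * (C (((2*n).factorial : ℝ))).eval y
      = ((2*n).factorial : ℝ) * ((-1:ℝ)^n * In n) := by
    simp only [eval_C]
    have : ∀ y : ℝ, (uP n).eval y * ((2*n).factorial : ℝ)
        = ((2*n).factorial : ℝ) * ((-1:ℝ)^n * (1 - y^2)^n) := by
      intro y
      simp only [uP, eval_pow, eval_sub, eval_one, eval_X]
      rw [show (y^2 - 1 : ℝ) = (-1) * (1 - y^2) by ring, mul_pow]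
      ring
    rw [intervalIntegral.integral_congr (fun y _ => this y),
      intervalIntegral.integral_const_mul, intervalIntegral.integral_const_mul, ← In]
  rw [huint] at hibp
  have key : ∫ y in (-1:ℝ)..1, (legPoly n).eval y * (legPoly n).eval y
      = (1 / ((2:ℝ)^n * (n.factorial : ℝ)))^2
        * ∫ y in (-1:ℝ)..1, (derivative^[n] (uP n)).eval y * (derivative^[n] (uP n)).eval y := by
    rw [← intervalIntegral.integral_const_mul]
    apply intervalIntegral.integral_congr
    intro y _
    simp only [legPoly, eval_mul, eval_C]
    ring
  rw [key, hibp]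
  rw [In_formula]
  have h1 : ((2*n+1).factorial : ℝ) = (2*n+1) * ((2*n).factorial : ℝ) := by
    rw [Nat.factorial_succ]; push_cast; ring
  have h2 : (2:ℝ)^(2*n+1) = 2^n * 2^n * 2 := by
    rw [show 2*n+1 = n + n + 1 by ring, pow_add, pow_add]; norm_num
  have hne1 : ((2*n).factorial : ℝ) ≠ 0 := by positivity
  have hne2 : (n.factorial : ℝ) ≠ 0 := by positivity
  have hne3 : (2:ℝ)^n ≠ 0 := by positivity
  have hne4 : (2*(n:ℝ)+1) ≠ 0 := by positivity
  rw [h1, h2]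
  have hsq : ((-1:ℝ))^n * (-1:ℝ)^n = 1 := by
    rw [← mul_pow]; norm_num
  have hsq2 : ((-1:ℝ))^(n*2) = 1 := by
    rw [pow_mul, sq, ← mul_pow]; norm_num
  field_simp
  ring_nf
  rw [hsq2]

lemma legPoly_ortho {m n : ℕ} (hmn : m < n) :
    ∫ y in (-1:ℝ)..1, (legPoly n).eval y * (legPoly m).eval y = 0 := by
  have hibp := poly_ibp_iter n (uP n) (legPoly m)
    (fun k hk y hy => uP_deriv_vanish n k hk y hy)
  have hz : derivative^[n] (legPoly m) = 0 := by
    rw [legPoly, iterate_derivative_C_mul]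
    rw [← Function.iterate_add_apply]
    rw [iterate_derivative_eq_zero (by rw [uP_natDegree]; omega)]
    simp
  rw [hz] at hibp
  simp only [eval_zero, mul_zero, intervalIntegral.integral_zero, mul_zero] at hibp
  have key : ∫ y in (-1:ℝ)..1, (legPoly n).eval y * (legPoly m).eval y
      = (1 / ((2:ℝ)^n * (n.factorial : ℝ)))
        * ∫ y in (-1:ℝ)..1, (derivative^[n] (uP n)).eval y * (legPoly m).eval y := by
    rw [← intervalIntegral.integral_const_mul]
    apply intervalIntegral.integral_congr
    intro y _
    simp only [legPoly, eval_mul, eval_C]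
    ring
  rw [key, hibp, mul_zero]

lemma legendreP_cont (n : ℕ) : Continuous (legendreP n) := by
  have : legendreP n = fun y => (legPoly n).eval y := funext (legendreP_eq n)
  rw [this]
  exact (legPoly n).continuous_aeval

lemma phi_sq_integral (n : ℕ) (hn : 1 ≤ n) :
    ∫ y in (-1:ℝ)..1, (legendreP (n+1) y - legendreP (n-1) y)^2
      = 2/(2*(n:ℝ)+3) + 2/(2*(n:ℝ)-1) := by
  set p := legPoly (n+1)
  set q := legPoly (n-1)
  have hint : ∀ r s : Polynomial ℝ,
      IntervalIntegrable (fun y => r.eval y * s.eval y) MeasureTheory.volume (-1:ℝ) 1 :=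
    fun r s => (r.continuous_aeval.mul s.continuous_aeval).intervalIntegrable _ _
  have hcongr : ∀ y ∈ Set.uIcc (-1:ℝ) 1,
      (legendreP (n+1) y - legendreP (n-1) y)^2
        = p.eval y * p.eval y - 2 * (p.eval y * q.eval y) + q.eval y * q.eval y := by
    intro y _
    rw [legendreP_eq, legendreP_eq]
    ring
  rw [intervalIntegral.integral_congr hcongr]
  rw [intervalIntegral.integral_add (((hint p p).sub (((hint p q).const_mul 2)))) (hint q q),
    intervalIntegral.integral_sub (hint p p) ((hint p q).const_mul 2),
    intervalIntegral.integral_const_mul]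
  have h1 := legPoly_sq_integral (n+1)
  have h2 := legPoly_sq_integral (n-1)
  have h3 := legPoly_ortho (show n-1 < n+1 by omega)
  rw [h1, h2, h3]
  have hcast : ((n-1 : ℕ) : ℝ) = (n : ℝ) - 1 := by
    have := Nat.cast_sub hn (R := ℝ); simpa using this
  rw [hcast]
  push_cast
  ring

lemma cs_lemma (φ : ℝ → ℝ) (hφ : Continuous φ) :
    (∫ y in (-1:ℝ)..1, |φ y|) ^ 2 ≤ 2 * ∫ y in (-1:ℝ)..1, (φ y)^2 := by
  set I := ∫ y in (-1:ℝ)..1, (φ y)^2 with hI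
  set A := ∫ y in (-1:ℝ)..1, |φ y| with hA
  have hI0 : 0 ≤ I := by
    apply intervalIntegral.integral_nonneg (by norm_num)
    intro y _; positivity
  have hA0 : 0 ≤ A := by
    apply intervalIntegral.integral_nonneg (by norm_num)
    intro y _; positivity
  have hstep : ∀ t : ℝ, 0 < t → A ≤ I / (2*t) + t := by
    intro t ht
    have hmono : A ≤ ∫ y in (-1:ℝ)..1, ((φ y)^2 / (2*t) + t/2) := by
      apply intervalIntegral.integral_mono_on (by norm_num)
      · exact hφ.abs.intervalIntegrable _ _
      · exact (((hφ.pow 2).div_const _).add continuous_const).intervalIntegrable _ _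
      · intro y _
        have h := sq_nonneg (|φ y| - t)
        have habs : |φ y|^2 = (φ y)^2 := sq_abs _
        rw [div_add' _ _ _ (by positivity), le_div_iff₀ (by positivity)]
        nlinarith
    calc A ≤ _ := hmono
      _ = I / (2*t) + t := by
        rw [intervalIntegral.integral_add (f := fun y => φ y ^ 2 / (2*t)) (g := fun _ => t/2) (((hφ.pow 2).div_const _).intervalIntegrable _ _)
          (continuous_const.intervalIntegrable _ _)]
        rw [intervalIntegral.integral_div, intervalIntegral.integral_const]
        simp only [← hI, smul_eq_mul]
        ring
  rcases eq_or_lt_of_le hI0 with h0 | hpos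
  · have hAle : A ≤ 0 := by
      by_contra h
      push_neg at h
      have := hstep (A/2) (by linarith)
      rw [← h0] at this
      simp at this
      linarith
    have : A = 0 := le_antisymm hAle hA0
    rw [this, ← h0]
    norm_num
  · set t := Real.sqrt (I/2) with ht
    have htpos : 0 < t := Real.sqrt_pos.mpr (by linarith)
    have ht2 : t^2 = I/2 := Real.sq_sqrt (by linarith)
    have h := hstep t htpos
    have h2 : A * (2*t) ≤ I + 2*t^2 := by
      have := mul_le_mul_of_nonneg_right h (by positivity : (0:ℝ) ≤ 2*t)
      calc A * (2*t) ≤ (I/(2*t) + t) * (2*t) := this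
        _ = I + 2*t^2 := by field_simp
    nlinarith [sq_nonneg (A - 2*t)]

lemma Aterm_sq_le
    (K : ℕ) (b : ℕ → ℝ) (L : ℝ) (G : ℕ → ℝ → ℝ)
    (hb0 : b 0 = -1) (hbK : b (K + 1) = 1)
    (hbmono : ∀ i ≤ K, b i < b (i + 1))
    (hL : 0 ≤ L)
    (hG : ∀ i ≤ K, ContDiffOn ℝ 1 (G i) (Set.Icc (b i) (b (i + 1))))
    (hGder : ∀ i ≤ K, ∀ y ∈ Set.Icc (b i) (b (i + 1)),
      |derivWithin (G i) (Set.Icc (b i) (b (i + 1))) y| ≤ L)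
    (n : ℕ) (hn : 1 ≤ n) :
    Aterm K b G n ^ 2 ≤ L ^ 2 * ((K : ℝ) + 1) ^ 2 *
      (1 / ((2*(n:ℝ)+1) * (2*(n:ℝ)+3)) + 1 / ((2*(n:ℝ)-1) * (2*(n:ℝ)+1))) := by
  set φ : ℝ → ℝ := fun y => legendreP (n + 1) y - legendreP (n - 1) y with hφdef
  have hφc : Continuous φ := (legendreP_cont (n+1)).sub (legendreP_cont (n-1))
  have hbmono' : ∀ i j, i ≤ j → j ≤ K + 1 → b i ≤ b j := by
    intro i j hij hj
    induction j with
    | zero => simp_all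
    | succ j ih =>
      rcases Nat.eq_or_lt_of_le hij with h | h
      · rw [h]
      · exact le_trans (ih (by omega) (by omega)) (hbmono j (by omega)).le
  set Aφ : ℝ := ∫ y in (-1:ℝ)..1, |φ y| with hAφ
  have hAφ0 : 0 ≤ Aφ := by
    apply intervalIntegral.integral_nonneg (by norm_num)
    intro y _; positivity
  have hIφ : ∫ y in (-1:ℝ)..1, (φ y)^2 = 2/(2*(n:ℝ)+3) + 2/(2*(n:ℝ)-1) :=
    phi_sq_integral n hn
  have hAφsq : Aφ^2 ≤ 2 * (2/(2*(n:ℝ)+3) + 2/(2*(n:ℝ)-1)) := by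
    rw [← hIφ]; exact cs_lemma φ hφc
  -- per-interval bound
  have hper : ∀ i ≤ K,
      |∫ y in (b i)..(b (i + 1)),
        derivWithin (G i) (Set.Icc (b i) (b (i + 1))) y * φ y| ≤ L * Aφ := by
    intro i hi
    have hii : b i ≤ b (i+1) := (hbmono i hi).le
    have hic : ContinuousOn (derivWithin (G i) (Set.Icc (b i) (b (i + 1))))
        (Set.Icc (b i) (b (i+1))) :=
      (hG i hi).continuousOn_derivWithin (uniqueDiffOn_Icc (hbmono i hi)) le_rfl
    have hint1 : IntervalIntegrable
        (fun y => |derivWithin (G i) (Set.Icc (b i) (b (i + 1))) y * φ y|)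
        MeasureTheory.volume (b i) (b (i+1)) :=
      ((hic.mul hφc.continuousOn).abs).intervalIntegrable_of_Icc hii
    calc |∫ y in (b i)..(b (i + 1)), derivWithin (G i) (Set.Icc (b i) (b (i + 1))) y * φ y|
        ≤ ∫ y in (b i)..(b (i + 1)),
            |derivWithin (G i) (Set.Icc (b i) (b (i + 1))) y * φ y| :=
          intervalIntegral.abs_integral_le_integral_abs hii
      _ ≤ ∫ y in (b i)..(b (i + 1)), L * |φ y| := by
          apply intervalIntegral.integral_mono_on hii hint1
            ((continuous_const.mul hφc.abs).intervalIntegrable _ _)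
          intro y hy
          rw [abs_mul]
          exact mul_le_mul_of_nonneg_right (hGder i hi y hy) (abs_nonneg _)
      _ = L * ∫ y in (b i)..(b (i + 1)), |φ y| := intervalIntegral.integral_const_mul _ _
      _ ≤ L * Aφ := by
          apply mul_le_mul_of_nonneg_left _ hL
          apply intervalIntegral.integral_mono_interval
            (by rw [← hb0]; exact hbmono' 0 i (by omega) (by omega)) hii
            (by rw [← hbK]; exact hbmono' (i+1) (K+1) (by omega) le_rfl)
            (Filter.Eventually.of_forall (fun y => abs_nonneg _))
            (hφc.abs.intervalIntegrable _ _)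
  -- sum bound
  set S : ℝ := ∑ i ∈ Finset.range (K + 1),
      ∫ y in (b i)..(b (i + 1)),
        derivWithin (G i) (Set.Icc (b i) (b (i + 1))) y * φ y with hS
  have hSabs : |S| ≤ ((K:ℝ)+1) * (L * Aφ) := by
    calc |S| ≤ ∑ i ∈ Finset.range (K + 1),
        |∫ y in (b i)..(b (i + 1)),
          derivWithin (G i) (Set.Icc (b i) (b (i + 1))) y * φ y| :=
        Finset.abs_sum_le_sum_abs _ _
      _ ≤ ∑ _i ∈ Finset.range (K + 1), L * Aφ := by
          apply Finset.sum_le_sum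
          intro i hi
          exact hper i (Nat.lt_succ_iff.mp (Finset.mem_range.mp hi))
      _ = ((K:ℝ)+1) * (L * Aφ) := by
          rw [Finset.sum_const, Finset.card_range]
          push_cast; ring
  have hsqrt : Real.sqrt (2*(n:ℝ)+1) ^ 2 = 2*(n:ℝ)+1 :=
    Real.sq_sqrt (by positivity)
  have hAeq : Aterm K b G n ^ 2 = S^2 / (4 * (2*(n:ℝ)+1)) := by
    rw [Aterm, ← hS]
    rw [mul_pow, neg_pow, div_pow, mul_pow, hsqrt]
    have h1 : (2*(n:ℝ)+1) ≠ 0 := by positivity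
    field_simp
    ring_nf
  rw [hAeq]
  have hS2 : S^2 ≤ (((K:ℝ)+1) * (L * Aφ))^2 := by
    have := sq_abs S
    nlinarith [abs_nonneg S, hSabs, sq_nonneg S]
  have hn1 : (1:ℝ) ≤ (n:ℝ) := by exact_mod_cast hn
  have hd1 : (0:ℝ) < 2*(n:ℝ)+1 := by linarith
  have hd2 : (0:ℝ) < 2*(n:ℝ)+3 := by linarith
  have hd3 : (0:ℝ) < 2*(n:ℝ)-1 := by linarith
  have hchain : S^2 ≤ ((K:ℝ)+1)^2 * L^2 * (2 * (2/(2*(n:ℝ)+3) + 2/(2*(n:ℝ)-1))) := by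
    calc S^2 ≤ (((K:ℝ)+1) * (L * Aφ))^2 := hS2
      _ = ((K:ℝ)+1)^2 * L^2 * Aφ^2 := by ring
      _ ≤ ((K:ℝ)+1)^2 * L^2 * (2 * (2/(2*(n:ℝ)+3) + 2/(2*(n:ℝ)-1))) := by
          apply mul_le_mul_of_nonneg_left hAφsq (by positivity)
  rw [div_le_iff₀ (by positivity)]
  calc S^2 ≤ ((K:ℝ)+1)^2 * L^2 * (2 * (2/(2*(n:ℝ)+3) + 2/(2*(n:ℝ)-1))) := hchain
    _ = L ^ 2 * ((K:ℝ)+1)^2 * (1 / ((2*(n:ℝ)+1) * (2*(n:ℝ)+3)) + 1 / ((2*(n:ℝ)-1) * (2*(n:ℝ)+1)))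
        * (4 * (2*(n:ℝ)+1)) := by
        field_simp
        ring

/-- tail sum of the squared integral terms. -/
theorem tsum_Aterm_sq_le
    (K : ℕ) (b : ℕ → ℝ) (L : ℝ) (G : ℕ → ℝ → ℝ) (g : ℝ → ℝ)
    (hb0 : b 0 = -1) (hbK : b (K + 1) = 1)
    (hbmono : ∀ i ≤ K, b i < b (i + 1))
    (hL : 0 ≤ L)
    (hG : ∀ i ≤ K, ContDiffOn ℝ 1 (G i) (Set.Icc (b i) (b (i + 1))))
    (hGder : ∀ i ≤ K, ∀ y ∈ Set.Icc (b i) (b (i + 1)),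
      |derivWithin (G i) (Set.Icc (b i) (b (i + 1))) y| ≤ L)
    (hg1 : ∀ i < K, ∀ y, b i ≤ y → y < b (i + 1) → g y = G i y)
    (hg2 : ∀ y ∈ Set.Icc (b K) (b (K + 1)), g y = G K y)
    (N : ℕ) (hN : 1 ≤ N) :
    (∑' k : ℕ, Aterm K b G (N + k) ^ 2) ≤
      L ^ 2 * ((K : ℝ) + 1) ^ 2 *
        (1 / (2 * (2 * (N : ℝ) + 1)) + 1 / (2 * (2 * (N : ℝ) - 1))) := by
  set F : ℕ → ℝ := fun n =>
    L ^ 2 * ((K : ℝ) + 1) ^ 2 *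
      (1 / (2 * (2 * (n : ℝ) + 1)) + 1 / (2 * (2 * (n : ℝ) - 1))) with hF
  have hFnonneg : ∀ n : ℕ, 1 ≤ n → 0 ≤ F n := by
    intro n hn
    have hn1 : (1:ℝ) ≤ (n:ℝ) := by exact_mod_cast hn
    have h1 : (0:ℝ) < 2 * (n:ℝ) + 1 := by linarith
    have h2 : (0:ℝ) < 2 * (n:ℝ) - 1 := by linarith
    positivity
  have hbound : ∀ n : ℕ, 1 ≤ n → Aterm K b G n ^ 2 ≤ F n - F (n + 1) := by
    intro n hn
    refine le_trans (Aterm_sq_le K b L G hb0 hbK hbmono hL hG hGder n hn) (le_of_eq ?_)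
    have hn1 : (1:ℝ) ≤ (n:ℝ) := by exact_mod_cast hn
    have h1 : (2 * (n:ℝ) + 1) ≠ 0 := by positivity
    have h2 : (2 * (n:ℝ) + 3) ≠ 0 := by positivity
    have h3 : (2 * (n:ℝ) - 1) ≠ 0 := by
      have : (0:ℝ) < 2 * (n:ℝ) - 1 := by linarith
      linarith
    have h4 : (2 * ((n:ℝ)+1) + 1) ≠ 0 := by positivity
    have h5 : (2 * ((n:ℝ)+1) - 1) ≠ 0 := by
      have : (0:ℝ) < 2 * ((n:ℝ)+1) - 1 := by linarith
      linarith
    simp only [hF]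
    push_cast
    field_simp
    ring
  have key : (∑' k : ℕ, Aterm K b G (N + k) ^ 2) ≤ F N := by
    apply Real.tsum_le_of_sum_range_le (fun k => sq_nonneg _)
    intro M
    calc ∑ k ∈ Finset.range M, Aterm K b G (N + k) ^ 2
        ≤ ∑ k ∈ Finset.range M, (F (N + k) - F (N + k + 1)) :=
          Finset.sum_le_sum (fun k _ => hbound (N + k) (by omega))
      _ = F (N + 0) - F (N + M) := Finset.sum_range_sub' (fun k => F (N + k)) M
      _ ≤ F N := by
          have := hFnonneg (N + M) (by omega)
          simp only [Nat.add_zero]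
          linarith
  exact key
end

section
/- In the piecewise setting on [−1,1], assume additionally that every interior breakpoint satisfies b_i ∈ [−0.9, 0.9]. Then there exists a universal constant C > 0 (independent of n, K, g and the breakpoints) such that for every integer n ≥ 2 the jump term B_n = (1/(2√(2n+1)))·Σ_{i=1}^{K} (g_i(b_i) − g_{i+1}(b_i))·(P_{n+1}(b_i) − P_{n−1}(b_i)) satisfies |B_n| ≤ C·S/n, where S = Σ_{i=1}^K |g_{i+1}(b_i) − g_i(b_i)|. -/
open MeasureTheory Set

section AuxLegendre
open Polynomial

lemma iteratedDeriv_polyeval (p : ℝ[X]) (n : ℕ) (y : ℝ) :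
    iteratedDeriv n (fun x => p.eval x) y = (derivative^[n] p).eval y := by
  induction n generalizing p y with
  | zero => simp
  | succ n ih =>
    rw [iteratedDeriv_succ', Function.iterate_succ_apply]
    rw [← ih p.derivative y]
    congr 1
    funext x
    exact Polynomial.deriv p  -- maybe wrong

lemma iter_deriv_X_mul (m : ℕ) (p : ℝ[X]) :
    derivative^[m+1] (X * p) = X * derivative^[m+1] p + (m+1 : ℝ[X]) * derivative^[m] p := by
  induction m generalizing p with
  | zero => simp [derivative_mul]; ring
  | succ m ih =>
    rw [Function.iterate_succ_apply, derivative_mul, derivative_X, one_mul]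
    rw [show derivative^[m+1] (p + X * derivative p) = derivative^[m+1] p + derivative^[m+1] (X * derivative p) by simp [iterate_map_add]]
    rw [ih (derivative p)]
    have e1 : derivative^[m] (derivative p) = derivative^[m+1] p :=
      (Function.iterate_succ_apply derivative m p).symm
    have e2 : derivative^[m+1] (derivative p) = derivative^[m+2] p :=
      (Function.iterate_succ_apply derivative (m+1) p).symm
    rw [e1, e2]
    push_cast
    ring

lemma iter_deriv_X2_mul (m : ℕ) (p : ℝ[X]) :
    derivative^[m+2] (X^2 * p) = X^2 * derivative^[m+2] p
      + (2*(m+2) : ℝ[X]) * (X * derivative^[m+1] p) + ((m+2)*(m+1) : ℝ[X]) * derivative^[m] p := by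
  have h : X^2 * p = X * (X * p) := by ring
  rw [h, iter_deriv_X_mul (m+1) (X*p), iter_deriv_X_mul (m+1) p, iter_deriv_X_mul m p]
  push_cast
  ring

noncomputable def Rod (n : ℕ) : ℝ[X] := derivative^[n] ((X^2-1)^n)

lemma legendre_ODE (n : ℕ) :
    (X^2 - 1) * derivative (derivative (Rod n)) + 2*X*derivative (Rod n)
      = ((n:ℝ[X])*((n:ℝ[X])+1)) * Rod n := by
  cases n with
  | zero => simp [Rod]
  | succ m =>
    set q : ℝ[X] := (X^2-1)^(m+1) with hq
    have hd : derivative (X^2 - 1 : ℝ[X]) = 2*X := by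
      simp [derivative_X_pow, map_ofNat]; norm_num
    have hCC : (C ((m:ℝ)+1) : ℝ[X]) = (m:ℝ[X]) + 1 := by
      rw [map_add, C_1, C_eq_natCast]
    have hC : (C (2*(m:ℝ)+2) : ℝ[X]) = 2 * ((m:ℝ[X])+1) := by
      rw [show (2*(m:ℝ)+2) = 2*((m:ℝ)+1) by ring, C_mul, hCC, map_ofNat]
    have h1 : (X^2 - 1) * derivative q = X * (C (2*(m:ℝ)+2) * q) := by
      rw [hq, derivative_pow, hd]
      simp only [Nat.add_sub_cancel, pow_succ]
      rw [hC]
      push_cast [hCC]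
      ring
    have h2 := congrArg (derivative^[m+2]) h1
    rw [show (X^2-1) * derivative q = X^2 * derivative q - derivative q by ring,
        iterate_derivative_sub, iter_deriv_X2_mul m (derivative q),
        iter_deriv_X_mul (m+1) (C (2*(m:ℝ)+2) * q),
        iterate_derivative_C_mul, iterate_derivative_C_mul] at h2
    have eA : derivative^[m] (derivative q) = Rod (m+1) :=
      (Function.iterate_succ_apply derivative m q).symm
    have eq2 : derivative^[m+2] q = derivative (Rod (m+1)) :=
      Function.iterate_succ_apply' derivative (m+1) q
    have eB : derivative^[m+1] (derivative q) = derivative (Rod (m+1)) := by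
      rw [← Function.iterate_succ_apply derivative (m+1) q]; exact eq2
    have eq3 : derivative^[m+3] q = derivative (derivative (Rod (m+1))) := by
      rw [Function.iterate_succ_apply' derivative (m+2) q, eq2]
    have eC : derivative^[m+2] (derivative q) = derivative (derivative (Rod (m+1))) := by
      rw [← Function.iterate_succ_apply derivative (m+2) q]; exact eq3
    rw [eA, eB, eC, eq2, show derivative^[m+1] q = Rod (m+1) from rfl, hC] at h2
    push_cast at h2 ⊢
    linear_combination h2

noncomputable def Vpoly (n : ℕ) : ℝ[X] :=
  ((n:ℝ[X])*((n:ℝ[X])+1)) * ((1 - X^2) * (Rod n)^2) + (1 - X^2)^2 * (derivative (Rod n))^2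

lemma deriv_Vpoly (n : ℕ) :
    derivative (Vpoly n) = ((n:ℝ[X])*((n:ℝ[X])+1)) * (-2 * X * (Rod n)^2) := by
  have hODE := legendre_ODE n
  have hc : derivative ((n:ℝ[X])*((n:ℝ[X])+1)) = 0 := by
    simp
  simp only [Vpoly, derivative_add, derivative_mul, derivative_pow, hc, derivative_one,
    derivative_sub, derivative_X_pow, derivative_X,
    show (C 2 : ℝ[X]) = 2 from map_ofNat C 2, C_eq_natCast, Nat.cast_ofNat]
  push_cast
  ring_nf
  linear_combination (-(2:ℝ[X])*(1-X^2)*derivative (Rod n)) * hODE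

lemma sq_Rod_le (n : ℕ) {b : ℝ} (hb1 : -0.9 ≤ b) (hb2 : b ≤ 0.9) :
    ((n:ℝ)*((n:ℝ)+1)) * ((19/100) * (eval b (Rod n))^2)
      ≤ ((n:ℝ)*((n:ℝ)+1)) * (2 * ∫ x in (-1:ℝ)..1, (eval x (Rod n))^2) := by
  set lam : ℝ := (n:ℝ)*((n:ℝ)+1) with hlam
  have hlam0 : 0 ≤ lam := by positivity
  set W : ℝ → ℝ := fun x => eval x (Vpoly n) with hW
  have hRc : Continuous fun x : ℝ => eval x (Rod n) := (Rod n).continuous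
  have hWd : ∀ x : ℝ, deriv W x = lam * (-2 * x * (eval x (Rod n))^2) := by
    intro x
    rw [hW, Polynomial.deriv, deriv_Vpoly]
    simp [hlam]
  have hWc : Continuous W := (Vpoly n).continuous
  have hWdiff : Differentiable ℝ W := fun x => ((Vpoly n).hasDerivAt x).differentiableAt
  have hmono : W b ≤ W 0 := by
    rcases le_total b 0 with hb | hb
    · have : MonotoneOn W (Set.Icc (-1:ℝ) 0) := by
        apply monotoneOn_of_deriv_nonneg (convex_Icc _ _) hWc.continuousOn
          (fun x _ => (hWdiff x).differentiableWithinAt)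
        intro x hx
        rw [interior_Icc] at hx
        rw [hWd x]
        exact mul_nonneg hlam0 (mul_nonneg (by nlinarith [hx.2]) (sq_nonneg _))
      exact this ⟨by linarith, hb⟩ ⟨by norm_num, le_refl 0⟩ hb
    · have : AntitoneOn W (Set.Icc (0:ℝ) 1) := by
        apply antitoneOn_of_deriv_nonpos (convex_Icc _ _) hWc.continuousOn
          (fun x _ => (hWdiff x).differentiableWithinAt)
        intro x hx
        rw [interior_Icc] at hx
        rw [hWd x]
        have h2 : lam * (-2 * x * (eval x (Rod n))^2)
            = -(lam * ((2 * x) * (eval x (Rod n))^2)) := by ring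
        rw [h2, neg_nonpos]
        exact mul_nonneg hlam0 (mul_nonneg (by nlinarith [hx.1]) (sq_nonneg _))
      exact this ⟨le_refl 0, by norm_num⟩ ⟨hb, by linarith⟩ hb
  have hcont1 : Continuous fun x : ℝ => lam * (-2 * x * (eval x (Rod n))^2) :=
    continuous_const.mul (((continuous_const.mul continuous_id).mul (hRc.pow 2)))
  have hcont2 : Continuous fun x : ℝ => lam * (2 * x * (eval x (Rod n))^2) :=
    continuous_const.mul (((continuous_const.mul continuous_id).mul (hRc.pow 2)))
  have hcont3 : Continuous fun x : ℝ => lam * (2 * (eval x (Rod n))^2) :=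
    continuous_const.mul ((continuous_const.mul (hRc.pow 2)))
  have hftc : ∫ x in (0:ℝ)..1, lam * (-2 * x * (eval x (Rod n))^2) = W 1 - W 0 := by
    apply intervalIntegral.integral_eq_sub_of_hasDerivAt
    · intro x _
      have h := (Vpoly n).hasDerivAt x
      have he : eval x (derivative (Vpoly n)) = lam * (-2 * x * (eval x (Rod n))^2) := by
        rw [deriv_Vpoly]; simp [hlam]
      rw [he] at h
      exact h
    · exact hcont1.intervalIntegrable _ _
  have hW1 : W 1 = 0 := by
    simp [hW, Vpoly]
  have hW0 : W 0 = ∫ x in (0:ℝ)..1, lam * (2 * x * (eval x (Rod n))^2) := by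
    have h : ∫ x in (0:ℝ)..1, lam * (2 * x * (eval x (Rod n))^2)
        = - ∫ x in (0:ℝ)..1, lam * (-2 * x * (eval x (Rod n))^2) := by
      rw [← intervalIntegral.integral_neg]
      congr 1; funext x; ring
    rw [h, hftc, hW1]; ring
  have hint1 : ∫ x in (0:ℝ)..1, lam * (2 * x * (eval x (Rod n))^2)
      ≤ ∫ x in (0:ℝ)..1, lam * (2 * (eval x (Rod n))^2) := by
    apply intervalIntegral.integral_mono_on (by norm_num)
      (hcont2.intervalIntegrable _ _) (hcont3.intervalIntegrable _ _)
    intro x hx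
    have h1 : x ≤ 1 := hx.2
    have h0 : 0 ≤ x := hx.1
    nlinarith [sq_nonneg (eval x (Rod n)), hlam0, mul_nonneg hlam0 (sq_nonneg (eval x (Rod n)))]
  have hint2 : ∫ x in (0:ℝ)..1, lam * (2 * (eval x (Rod n))^2)
      = lam * (2 * ∫ x in (0:ℝ)..1, (eval x (Rod n))^2) := by
    rw [intervalIntegral.integral_const_mul, intervalIntegral.integral_const_mul]
  have hint3 : ∫ x in (0:ℝ)..1, (eval x (Rod n))^2 ≤ ∫ x in (-1:ℝ)..1, (eval x (Rod n))^2 := by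
    have hsplit : (∫ x in (-1:ℝ)..0, (eval x (Rod n))^2) + ∫ x in (0:ℝ)..1, (eval x (Rod n))^2
        = ∫ x in (-1:ℝ)..1, (eval x (Rod n))^2 := by
      apply intervalIntegral.integral_add_adjacent_intervals <;>
        exact ((hRc.pow 2).intervalIntegrable _ _)
    have hpos : 0 ≤ ∫ x in (-1:ℝ)..0, (eval x (Rod n))^2 := by
      apply intervalIntegral.integral_nonneg (by norm_num)
      intro x _; positivity
    linarith
  have hlow : lam * ((19/100) * (eval b (Rod n))^2) ≤ W b := by
    have hWb : W b = lam * ((1 - b^2) * (eval b (Rod n))^2)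
        + (1-b^2)^2 * (eval b (derivative (Rod n)))^2 := by
      simp [hW, Vpoly, hlam]
    rw [hWb]
    have hb' : (19/100 : ℝ) ≤ 1 - b^2 := by nlinarith
    nlinarith [sq_nonneg (eval b (Rod n)), sq_nonneg ((1-b^2) * eval b (derivative (Rod n))),
      mul_nonneg hlam0 (sq_nonneg (eval b (Rod n)))]
  calc lam * ((19/100) * (eval b (Rod n))^2) ≤ W b := hlow
    _ ≤ W 0 := hmono
    _ = ∫ x in (0:ℝ)..1, lam * (2 * x * (eval x (Rod n))^2) := hW0
    _ ≤ lam * (2 * ∫ x in (0:ℝ)..1, (eval x (Rod n))^2) := by rw [← hint2]; exact hint1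
    _ ≤ lam * (2 * ∫ x in (-1:ℝ)..1, (eval x (Rod n))^2) := by
        apply mul_le_mul_of_nonneg_left _ hlam0
        linarith

lemma rod_div (n j : ℕ) (hj : j ≤ n) :
    ∃ s : ℝ[X], derivative^[j] ((X^2-1)^n) = (X^2-1)^(n-j) * s := by
  induction j with
  | zero => exact ⟨1, by simp⟩
  | succ j ih =>
    obtain ⟨s, hs⟩ := ih (le_of_lt (Nat.lt_of_succ_le hj))
    refine ⟨((n-j : ℕ) : ℝ[X]) * (2*X) * s + (X^2-1) * derivative s, ?_⟩
    rw [Function.iterate_succ_apply', hs, derivative_mul, derivative_pow]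
    have h1 : n - j = (n - (j+1)) + 1 := by omega
    have hd : derivative (X^2 - 1 : ℝ[X]) = 2*X := by
      simp [derivative_X_pow, map_ofNat]; norm_num
    rw [hd, h1]
    simp only [Nat.add_sub_cancel, pow_succ, map_add, C_1, C_eq_natCast]
    push_cast
    ring

lemma rod_eval_boundary (n j : ℕ) (hj : j < n) (x : ℝ) (hx : x^2 = 1) :
    eval x (derivative^[j] ((X^2-1)^n)) = 0 := by
  obtain ⟨s, hs⟩ := rod_div n j (le_of_lt hj)
  rw [hs, eval_mul, eval_pow]
  have : eval x (X^2 - 1 : ℝ[X]) = 0 := by simp [hx]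
  rw [this, zero_pow (by omega), zero_mul]

lemma rod_top_deriv (n : ℕ) :
    derivative^[2*n] ((X^2-1 : ℝ[X])^n) = C (((2*n).factorial : ℝ)) := by
  have hm : ((X^2-1 : ℝ[X])^n).Monic := by
    apply Polynomial.Monic.pow
    have : (X^2 - 1 : ℝ[X]) = X^2 - C 1 := by simp
    rw [this]
    exact monic_X_pow_sub_C 1 (by norm_num)
  have hdeg : ((X^2-1 : ℝ[X])^n).natDegree = 2*n := by
    rw [Polynomial.Monic.natDegree_pow]
    · have : (X^2 - 1 : ℝ[X]) = X^2 - C 1 := by simp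
      rw [this, natDegree_X_pow_sub_C]
      ring
    · have : (X^2 - 1 : ℝ[X]) = X^2 - C 1 := by simp
      rw [this]
      exact monic_X_pow_sub_C 1 (by norm_num)
  have hd0 : (derivative^[2*n] ((X^2-1 : ℝ[X])^n)).natDegree = 0 := by
    have := Polynomial.natDegree_iterate_derivative ((X^2-1 : ℝ[X])^n) (2*n)
    omega
  have hc : ((X^2-1 : ℝ[X])^n).coeff (2*n) = 1 := by
    rw [← hdeg]; exact hm.coeff_natDegree
  rw [Polynomial.eq_C_of_natDegree_eq_zero hd0, coeff_iterate_derivative]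
  congr 1
  rw [show (0 + 2*n) = 2*n from by omega, hc, Nat.descFactorial_self]
  simp

lemma ibp_chain (n : ℕ) : ∀ k ≤ n,
    ∫ x in (-1:ℝ)..1, eval x (derivative^[n+k] ((X^2-1 : ℝ[X])^n)) *
        eval x (derivative^[n-k] ((X^2-1 : ℝ[X])^n))
      = (-1:ℝ)^k * ∫ x in (-1:ℝ)..1, (eval x (derivative^[n] ((X^2-1 : ℝ[X])^n)))^2 := by
  intro k hk
  induction k with
  | zero =>
    simp [sq]
  | succ k ih =>
    have hk' : k ≤ n := by omega
    set q : ℝ[X] := (X^2-1 : ℝ[X])^n with hq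
    have key : ∫ x in (-1:ℝ)..1, eval x (derivative^[n+(k+1)] q) * eval x (derivative^[n-(k+1)] q)
        = - ∫ x in (-1:ℝ)..1, eval x (derivative^[n+k] q) * eval x (derivative^[n-k] q) := by
      have hu : ∀ x ∈ Set.uIcc (-1:ℝ) 1, HasDerivAt (fun y => eval y (derivative^[n+k] q))
          (eval x (derivative^[n+(k+1)] q)) x := by
        intro x _
        have h := (derivative^[n+k] q).hasDerivAt x
        rwa [show derivative (derivative^[n+k] q) = derivative^[n+(k+1)] q from
          (Function.iterate_succ_apply' derivative (n+k) q).symm] at h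
      have hv : ∀ x ∈ Set.uIcc (-1:ℝ) 1, HasDerivAt (fun y => eval y (derivative^[n-(k+1)] q))
          (eval x (derivative^[n-k] q)) x := by
        intro x _
        have h := (derivative^[n-(k+1)] q).hasDerivAt x
        rwa [show derivative (derivative^[n-(k+1)] q) = derivative^[n-k] q by
          rw [← Function.iterate_succ_apply' derivative (n-(k+1)) q]
          congr 1
          omega] at h
      have hb1 : eval (1:ℝ) (derivative^[n-(k+1)] q) = 0 :=
        rod_eval_boundary n (n-(k+1)) (by omega) 1 (by norm_num)
      have hb2 : eval (-1:ℝ) (derivative^[n-(k+1)] q) = 0 :=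
        rod_eval_boundary n (n-(k+1)) (by omega) (-1) (by norm_num)
      calc ∫ x in (-1:ℝ)..1, eval x (derivative^[n+(k+1)] q) * eval x (derivative^[n-(k+1)] q)
          = ∫ x in (-1:ℝ)..1, eval x (derivative^[n-(k+1)] q) * eval x (derivative^[n+(k+1)] q) := by
            congr 1; funext x; ring
        _ = eval 1 (derivative^[n-(k+1)] q) * eval 1 (derivative^[n+k] q)
            - eval (-1) (derivative^[n-(k+1)] q) * eval (-1) (derivative^[n+k] q)
            - ∫ x in (-1:ℝ)..1, eval x (derivative^[n-k] q) * eval x (derivative^[n+k] q) := by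
            exact intervalIntegral.integral_mul_deriv_eq_deriv_mul hv hu
              (((derivative^[n-k] q).continuous).intervalIntegrable _ _)
              (((derivative^[n+(k+1)] q).continuous).intervalIntegrable _ _)
        _ = - ∫ x in (-1:ℝ)..1, eval x (derivative^[n+k] q) * eval x (derivative^[n-k] q) := by
            rw [hb1, hb2]
            have : ∫ x in (-1:ℝ)..1, eval x (derivative^[n-k] q) * eval x (derivative^[n+k] q)
                = ∫ x in (-1:ℝ)..1, eval x (derivative^[n+k] q) * eval x (derivative^[n-k] q) := by
              congr 1; funext x; ring
            rw [this]; ring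
    rw [key, ih hk']
    ring

lemma J_rec (n : ℕ) : (2*(n:ℝ)+3) * ∫ x in (-1:ℝ)..1, (1-x^2)^(n+1)
    = (2*(n:ℝ)+2) * ∫ x in (-1:ℝ)..1, (1-x^2)^n := by
  have hderiv : ∀ x : ℝ, HasDerivAt (fun y : ℝ => y * (1-y^2)^(n+1))
      ((2*(n:ℝ)+3) * (1-x^2)^(n+1) - (2*(n:ℝ)+2) * (1-x^2)^n) x := by
    intro x
    have hg : HasDerivAt (fun y : ℝ => 1 - y^2) (-(2*x)) x := by
      simpa using (hasDerivAt_pow 2 x).const_sub 1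
    have h2 := hg.pow (n+1)
    have h : HasDerivAt (fun y : ℝ => y * (1-y^2)^(n+1)) _ x := (hasDerivAt_id x).mul h2
    convert h using 1
    have hp : (1-x^2)^(n+1) = (1-x^2)^n * (1-x^2) := pow_succ _ _
    have hp2 : (1-x^2)^(n+1-1) = (1-x^2)^n := by norm_num
    simp only [id_eq]
    rw [hp2, hp]
    push_cast
    ring
  have hcont : Continuous fun x : ℝ => (2*(n:ℝ)+3) * (1-x^2)^(n+1) - (2*(n:ℝ)+2) * (1-x^2)^n := by
    continuity
  have hftc := intervalIntegral.integral_eq_sub_of_hasDerivAt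
    (fun x _ => hderiv x) (hcont.intervalIntegrable (-1) 1)
  have hval : (fun y : ℝ => y * (1-y^2)^(n+1)) 1 - (fun y : ℝ => y * (1-y^2)^(n+1)) (-1) = 0 := by
    norm_num
  rw [hval] at hftc
  have hsplit : ∫ x in (-1:ℝ)..1, ((2*(n:ℝ)+3) * (1-x^2)^(n+1) - (2*(n:ℝ)+2) * (1-x^2)^n)
      = (2*(n:ℝ)+3) * (∫ x in (-1:ℝ)..1, (1-x^2)^(n+1))
        - (2*(n:ℝ)+2) * ∫ x in (-1:ℝ)..1, (1-x^2)^n := by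
    rw [intervalIntegral.integral_sub, intervalIntegral.integral_const_mul,
      intervalIntegral.integral_const_mul]
    · exact (Continuous.intervalIntegrable (by continuity) _ _)
    · exact (Continuous.intervalIntegrable (by continuity) _ _)
  rw [hsplit] at hftc
  linarith

lemma J_val (n : ℕ) : ∫ x in (-1:ℝ)..1, (1-x^2)^n
    = 2 * 4^n * ((n.factorial:ℝ))^2 / ((2*n+1).factorial) := by
  induction n with
  | zero => norm_num
  | succ n ih =>
    have hrec := J_rec n
    have hne : (2*(n:ℝ)+3) ≠ 0 := by positivity
    have hJ : ∫ x in (-1:ℝ)..1, (1-x^2)^(n+1)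
        = (2*(n:ℝ)+2) / (2*(n:ℝ)+3) * ∫ x in (-1:ℝ)..1, (1-x^2)^n := by
      field_simp
      linarith [hrec]
    rw [hJ, ih]
    have hf1 : ((2*(n+1)+1).factorial : ℝ) = (2*(n:ℝ)+3) * ((2*(n:ℝ)+2) * ((2*n+1).factorial : ℝ)) := by
      rw [show 2*(n+1)+1 = (2*n+1)+2 from by omega, Nat.factorial_succ, Nat.factorial_succ]
      push_cast
      ring
    have hf2 : (((n+1).factorial : ℝ)) = ((n:ℝ)+1) * (n.factorial : ℝ) := by
      rw [Nat.factorial_succ]; push_cast; ring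
    rw [hf1, hf2]
    have h1 : ((2*n+1).factorial : ℝ) ≠ 0 := by positivity
    field_simp
    ring

lemma integral_Rod_sq (n : ℕ) : ∫ x in (-1:ℝ)..1, (eval x (Rod n))^2
    = 2 * 4^n * ((n.factorial:ℝ))^2 / (2*(n:ℝ)+1) := by
  have h := ibp_chain n n le_rfl
  rw [show n+n = 2*n from by omega, Nat.sub_self] at h
  simp only [Function.iterate_zero, id_eq, rod_top_deriv, eval_C] at h
  have hL : ∫ x in (-1:ℝ)..1, (((2*n).factorial : ℝ)) * eval x ((X^2-1 : ℝ[X])^n)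
      = (((2*n).factorial : ℝ)) * ((-1:ℝ)^n * ∫ x in (-1:ℝ)..1, (1-x^2)^n) := by
    rw [intervalIntegral.integral_const_mul]
    congr 1
    rw [← intervalIntegral.integral_const_mul]
    congr 1; funext x
    rw [eval_pow]
    simp only [eval_sub, eval_pow, eval_one, eval_X]
    rw [show (x^2 - 1 : ℝ) = -(1-x^2) by ring, neg_pow]
  rw [hL] at h
  have hR : (∫ x in (-1:ℝ)..1, (eval x (Rod n))^2)
      = ∫ x in (-1:ℝ)..1, (eval x (derivative^[n] ((X^2-1 : ℝ[X])^n)))^2 := rfl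
  rw [hR]
  have hsign : ((-1:ℝ)^n) * ((-1:ℝ)^n) = 1 := by
    rw [← pow_add]
    exact (neg_one_pow_eq_one_iff_even (by norm_num)).mpr (by exact ⟨n, by ring⟩)
  have h' := congrArg (fun t => ((-1:ℝ)^n) * t) h
  rw [show ((-1:ℝ)^n) * ((((2*n).factorial : ℝ)) * ((-1:ℝ)^n * ∫ x in (-1:ℝ)..1, (1-x^2)^n))
      = (((-1:ℝ)^n) * ((-1:ℝ)^n)) * ((((2*n).factorial : ℝ)) * ∫ x in (-1:ℝ)..1, (1-x^2)^n) from by ring,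
    hsign, one_mul, show ((-1:ℝ)^n) * ((-1:ℝ)^n * ∫ x in (-1:ℝ)..1, (eval x (derivative^[n] ((X^2-1 : ℝ[X])^n)))^2)
      = (((-1:ℝ)^n) * ((-1:ℝ)^n)) * ∫ x in (-1:ℝ)..1, (eval x (derivative^[n] ((X^2-1 : ℝ[X])^n)))^2 from by ring,
    hsign, one_mul] at h'
  rw [← h', J_val n]
  have hf : ((2*n+1).factorial : ℝ) = (2*(n:ℝ)+1) * ((2*n).factorial : ℝ) := by
    rw [Nat.factorial_succ]; push_cast; ring
  have h1 : ((2*n).factorial : ℝ) ≠ 0 := by positivity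
  rw [hf]
  field_simp

lemma legendreP_eq_s9 (n : ℕ) (y : ℝ) :
    legendreP n y = (1 / ((2 : ℝ) ^ n * (n.factorial : ℝ))) * eval y (Rod n) := by
  unfold legendreP Rod
  congr 1
  have : (fun x : ℝ => (x ^ 2 - 1) ^ n) = fun x : ℝ => eval x ((X^2-1 : ℝ[X])^n) := by
    funext x; simp
  rw [this, iteratedDeriv_polyeval]

lemma legendre_sq_le (n : ℕ) (hn : 1 ≤ n) {b : ℝ} (hb1 : -0.9 ≤ b) (hb2 : b ≤ 0.9) :
    (legendreP n b)^2 ≤ 22/(2*(n:ℝ)+1) := by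
  have hlam : (0:ℝ) < (n:ℝ)*((n:ℝ)+1) := by
    have : (1:ℝ) ≤ (n:ℝ) := by exact_mod_cast hn
    nlinarith
  have h := (mul_le_mul_iff_right₀ hlam).mp (sq_Rod_le n hb1 hb2)
  rw [integral_Rod_sq n] at h
  have hfac : (0:ℝ) < (n.factorial : ℝ) := by positivity
  have h2n : (0:ℝ) < 2*(n:ℝ)+1 := by positivity
  have hRb : (eval b (Rod n))^2 ≤ (400/19) * 4^n * ((n.factorial:ℝ))^2 / (2*(n:ℝ)+1) := by
    have h' := mul_le_mul_of_nonneg_right h (le_of_lt h2n)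
    have hc : 2 * (2 * 4^n * ((n.factorial:ℝ))^2 / (2*(n:ℝ)+1)) * (2*(n:ℝ)+1)
        = 4 * 4^n * ((n.factorial:ℝ))^2 := by field_simp; ring
    rw [hc] at h'
    rw [le_div_iff₀ h2n]
    nlinarith [h']
  rw [legendreP_eq_s9]
  have hpow : ((2:ℝ)^n * (n.factorial:ℝ))^2 = 4^n * ((n.factorial:ℝ))^2 := by
    rw [mul_pow, ← pow_mul, show n*2 = 2*n from by ring, pow_mul]
    norm_num
  rw [mul_pow, one_div, inv_pow, hpow]
  rw [inv_mul_le_iff₀ (by positivity)]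
  calc (eval b (Rod n))^2 ≤ (400/19) * 4^n * ((n.factorial:ℝ))^2 / (2*(n:ℝ)+1) := hRb
    _ ≤ 4^n * ((n.factorial:ℝ))^2 * (22/(2*(n:ℝ)+1)) := by
        rw [show (400/19) * 4^n * ((n.factorial:ℝ))^2 / (2*(n:ℝ)+1)
            = 4^n * ((n.factorial:ℝ))^2 * ((400/19)/(2*(n:ℝ)+1)) from by ring]
        gcongr
        norm_num

end AuxLegendre

/-- with interior breakpoints in [-0.9, 0.9], there is a universal
constant C > 0 with |B_n| ≤ C·S/n for all n ≥ 2. -/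
theorem abs_Bterm_le_of_interior_breakpoints :
    ∃ C : ℝ, 0 < C ∧
      ∀ (K : ℕ) (b : ℕ → ℝ) (L : ℝ) (G : ℕ → ℝ → ℝ) (g : ℝ → ℝ),
        b 0 = -1 → b (K + 1) = 1 →
        (∀ i ≤ K, b i < b (i + 1)) →
        0 ≤ L →
        (∀ i ≤ K, ContDiffOn ℝ 1 (G i) (Set.Icc (b i) (b (i + 1)))) →
        (∀ i ≤ K, ∀ y ∈ Set.Icc (b i) (b (i + 1)),
          |derivWithin (G i) (Set.Icc (b i) (b (i + 1))) y| ≤ L) →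
        (∀ i < K, ∀ y, b i ≤ y → y < b (i + 1) → g y = G i y) →
        (∀ y ∈ Set.Icc (b K) (b (K + 1)), g y = G K y) →
        (∀ i, 1 ≤ i → i ≤ K → b i ∈ Set.Icc (-0.9 : ℝ) 0.9) →
        ∀ n : ℕ, 2 ≤ n →
          |Bterm K b G n| ≤ C * jumpSum K b G / (n : ℝ) := by

  refine ⟨5, by norm_num, ?_⟩
  intro K b L G g hb0 hbK hblt hL hcd hder hg1 hg2 hbint n hn
  have hn1 : (1:ℝ) ≤ (n:ℝ) := by exact_mod_cast Nat.one_le_of_lt hn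
  have hnpos : (0:ℝ) < (n:ℝ) := by linarith
  have hsn : (0:ℝ) < Real.sqrt n := Real.sqrt_pos.mpr hnpos
  have hS0 : 0 ≤ jumpSum K b G := Finset.sum_nonneg (fun i _ => abs_nonneg _)
  have hsqrt22 : Real.sqrt 22 ≤ 5 := by
    have h1 : Real.sqrt 22 ≤ Real.sqrt 25 := Real.sqrt_le_sqrt (by norm_num)
    have h2 : Real.sqrt 25 = 5 := by
      rw [show (25:ℝ) = 5^2 by norm_num, Real.sqrt_sq (by norm_num)]
    linarith
  -- pointwise legendre bounds
  have hleg : ∀ i ∈ Finset.Icc 1 K,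
      |legendreP (n+1) (b i) - legendreP (n-1) (b i)| ≤ 2 * (Real.sqrt 22 / Real.sqrt n) := by
    intro i hi
    rw [Finset.mem_Icc] at hi
    obtain ⟨hb1, hb2⟩ := hbint i hi.1 hi.2
    have key : ∀ m : ℕ, 1 ≤ m → (n:ℝ) ≤ 2*(m:ℝ)+1 →
        |legendreP m (b i)| ≤ Real.sqrt 22 / Real.sqrt n := by
      intro m hm hnm
      have hsq := legendre_sq_le m hm hb1 hb2
      have h22 : (22:ℝ)/(2*(m:ℝ)+1) ≤ 22/(n:ℝ) := by
        apply div_le_div_of_nonneg_left (by norm_num) hnpos hnm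
      have : |legendreP m (b i)| ≤ Real.sqrt (22/(n:ℝ)) := by
        rw [← Real.sqrt_sq_eq_abs]
        exact Real.sqrt_le_sqrt (by linarith)
      rwa [Real.sqrt_div (by norm_num) _] at this
    have k1 : |legendreP (n+1) (b i)| ≤ Real.sqrt 22 / Real.sqrt n := by
      apply key (n+1) (by omega)
      push_cast; linarith
    have k2 : |legendreP (n-1) (b i)| ≤ Real.sqrt 22 / Real.sqrt n := by
      apply key (n-1) (by omega)
      have : ((n-1:ℕ):ℝ) = (n:ℝ) - 1 := by
        rw [Nat.cast_sub (by omega)]; norm_num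
      rw [this]; linarith
    calc |legendreP (n+1) (b i) - legendreP (n-1) (b i)|
        ≤ |legendreP (n+1) (b i)| + |legendreP (n-1) (b i)| := abs_sub _ _
      _ ≤ 2 * (Real.sqrt 22 / Real.sqrt n) := by linarith
  -- bound on the sum
  have hsum : |∑ i ∈ Finset.Icc 1 K, (G (i - 1) (b i) - G i (b i)) *
      (legendreP (n + 1) (b i) - legendreP (n - 1) (b i))|
      ≤ 2 * (Real.sqrt 22 / Real.sqrt n) * jumpSum K b G := by
    calc |∑ i ∈ Finset.Icc 1 K, (G (i - 1) (b i) - G i (b i)) *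
        (legendreP (n + 1) (b i) - legendreP (n - 1) (b i))|
        ≤ ∑ i ∈ Finset.Icc 1 K, |(G (i - 1) (b i) - G i (b i)) *
          (legendreP (n + 1) (b i) - legendreP (n - 1) (b i))| := Finset.abs_sum_le_sum_abs _ _
      _ ≤ ∑ i ∈ Finset.Icc 1 K, |G i (b i) - G (i - 1) (b i)| * (2 * (Real.sqrt 22 / Real.sqrt n)) := by
          apply Finset.sum_le_sum
          intro i hi
          rw [abs_mul, abs_sub_comm (G (i-1) (b i))]
          exact mul_le_mul_of_nonneg_left (hleg i hi) (abs_nonneg _)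
      _ = 2 * (Real.sqrt 22 / Real.sqrt n) * jumpSum K b G := by
          rw [jumpSum, ← Finset.sum_mul, mul_comm]
  -- coefficient
  have hcoef : 0 < Real.sqrt (2*(n:ℝ)+1) := Real.sqrt_pos.mpr (by linarith)
  have hcoef2 : Real.sqrt (n:ℝ) ≤ Real.sqrt (2*(n:ℝ)+1) := Real.sqrt_le_sqrt (by linarith)
  have hBabs : |Bterm K b G n| ≤ (1 / (2 * Real.sqrt (2*(n:ℝ)+1))) *
      (2 * (Real.sqrt 22 / Real.sqrt n) * jumpSum K b G) := by
    rw [Bterm, abs_mul, abs_of_nonneg (by positivity : (0:ℝ) ≤ 1 / (2 * Real.sqrt (2*(n:ℝ)+1)))]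
    exact mul_le_mul_of_nonneg_left hsum (by positivity)
  have hfinal : (1 / (2 * Real.sqrt (2*(n:ℝ)+1))) *
      (2 * (Real.sqrt 22 / Real.sqrt n) * jumpSum K b G) ≤ 5 * jumpSum K b G / (n:ℝ) := by
    have step1 : (1 / (2 * Real.sqrt (2*(n:ℝ)+1))) *
        (2 * (Real.sqrt 22 / Real.sqrt n) * jumpSum K b G)
        ≤ (1 / (2 * Real.sqrt n)) * (2 * (Real.sqrt 22 / Real.sqrt n) * jumpSum K b G) := by
      apply mul_le_mul_of_nonneg_right _ (by positivity)
      apply div_le_div_of_nonneg_left (by norm_num) (by positivity)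
      linarith [hcoef2]
    have step2 : (1 / (2 * Real.sqrt n)) * (2 * (Real.sqrt 22 / Real.sqrt n) * jumpSum K b G)
        = Real.sqrt 22 * jumpSum K b G / (n:ℝ) := by
      have hs2 : Real.sqrt n * Real.sqrt n = (n:ℝ) := Real.mul_self_sqrt (le_of_lt hnpos)
      field_simp
      linear_combination (-jumpSum K b G) * hs2
    have step3 : Real.sqrt 22 * jumpSum K b G / (n:ℝ) ≤ 5 * jumpSum K b G / (n:ℝ) := by
      rw [div_le_div_iff₀ hnpos hnpos]
      nlinarith [mul_le_mul_of_nonneg_right hsqrt22 hS0]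
    linarith
  linarith
end
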